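/- Let λ₁ > -λ₂ > λ₃ > 0 be real numbers with λ₂ < 0 < λ₃ < λ₁ (i.e., λ₁ > -λ₂ > λ₃ > 0). Then (1/λ₁ + 1/λ₂ + 1/λ₃)(λ₁ + λ₂ + λ₃) > 1. -/
import Mathlib

theorem stmt_0 (l1 l2 l3 : ℝ) (h1 : l1 > -l2) (h2 : -l2 > l3) (h3 : l3 > 0) :
    (1 / l1 + 1 / l2 + 1 / l3) * (l1 + l2 + l3) > 1 := by
  have hl1 : l1 > 0 := by linarith
  have hl2 : l2 < 0 := by linarith
  have h1' : l1 ≠ 0 := ne_of_gt hl1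
  have h2' : l2 ≠ 0 := ne_of_lt hl2
  have h3' : l3 ≠ 0 := ne_of_gt h3
  rw [gt_iff_lt, show (1:ℝ) = 1 by rfl]
  rw [div_add_div _ _ h1' h2', div_add_div _ _ (mul_ne_zero h1' h2') h3']
  rw [div_mul_eq_mul_div, lt_div_iff_of_neg (by nlinarith [mul_pos hl1 h3] : l1*l2*l3 < 0)]
  nlinarith [mul_pos hl1 h3, sq_nonneg (l1+l2), sq_nonneg (l2+l3), mul_pos (sub_pos.2 h1) (sub_pos.2 h2)]
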